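/- Let R_0 = ℂ[X₁,X₂], S = R_0[U₁,U₂] and I = (U₁(X₁U₁+X₂U₂), U₂(X₁U₁+X₂U₂)) ⊆ S. Then content(I) = (X₁, X₂) as an ideal of R_0, yet the element X₁U₁ + X₂U₂ generates the (U₁,U₂)-torsion submodule of S/I and this submodule does not vanish after localizing at X₁; in particular, the image of X₁U₁+X₂U₂ in (S/I) localized at X₁ is a nonzero element annihilated by the ideal (U₁,U₂). -/

import Mathlib

open MvPolynomial

set_option synthInstance.maxHeartbeats 1000000
set_option maxHeartbeats 2000000

noncomputable section

/-- `R₀ = ℂ[X₁,X₂]`. -/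
abbrev R0 := MvPolynomial (Fin 2) ℂ

/-- `S = R₀[U₁,U₂] = ℂ[X₁,X₂][U₁,U₂]`. -/
abbrev S := MvPolynomial (Fin 2) R0

/-- The content of an ideal of `R₀[U₁,U₂]`: the ideal of `R₀` generated by all
coefficients of all of its elements. -/
def idealContent (J : Ideal S) : Ideal R0 :=
  Ideal.span (⋃ f ∈ J, Set.range fun m => MvPolynomial.coeff m f)

/-- `g = X₁U₁ + X₂U₂` as an element of `S`. -/
def gElt : S := C (X 0) * X 0 + C (X 1) * X 1

/-- The ideal `I = (U₁(X₁U₁+X₂U₂), U₂(X₁U₁+X₂U₂))` of `S`. -/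
def idlI : Ideal S := Ideal.span {(X 0 : S) * gElt, (X 1 : S) * gElt}

lemma prime_X0 : Prime (X 0 : R0) := by
  rw [← MulEquiv.prime_iff (MvPolynomial.finSuccEquiv ℂ 1).toMulEquiv]
  simpa [MvPolynomial.finSuccEquiv_X_zero] using Polynomial.prime_X

lemma gElt_eq : gElt = monomial (Finsupp.single 0 1) (X 0) + monomial (Finsupp.single 1 1) (X 1) := by
  simp [gElt, C_mul_X_eq_monomial]

lemma gElt_ne_zero : gElt ≠ 0 := by
  intro h
  have : coeff (Finsupp.single 0 1) gElt = 0 := by rw [h]; simp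
  rw [gElt_eq] at this
  simp [coeff_monomial, Finsupp.single_eq_single_iff] at this

lemma U0g_eq : (X 0 : S) * gElt =
    monomial (Finsupp.single 0 2) (X 0) + monomial (Finsupp.single 0 1 + Finsupp.single 1 1) (X 1) := by
  rw [gElt_eq, mul_add]
  rw [X, monomial_mul, monomial_mul]
  rw [show ((Finsupp.single 0 1 : Fin 2 →₀ ℕ) + Finsupp.single 0 1) = Finsupp.single 0 2 by
    rw [← Finsupp.single_add]]
  simp

abbrev B := MvPolynomial (Fin 1) R0

lemma phi_exists : ∃ φ : B →+* ℂ, φ (C (X 0)) = 0 ∧ φ (C (X 1) * X 0) = 1 := by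
  refine ⟨eval₂Hom (MvPolynomial.eval (fun i : Fin 2 => if i = 0 then 0 else 1)) (fun _ => 1), ?_, ?_⟩ <;>
    simp

lemma unit_of_dvd {r : B} (h0 : r ∣ C (X 0)) (h1 : r ∣ C (X 1) * X 0) : IsUnit r := by
  have hp : Prime (C (X 0) : B) := (prime_C_iff (Fin 1)).mpr prime_X0
  obtain ⟨c, hc⟩ := h0
  rcases hp.irreducible.isUnit_or_isUnit hc with h | h
  · exact h
  · exfalso
    obtain ⟨u, rfl⟩ := h
    have hdvd : (C (X 0) : B) ∣ C (X 1) * X 0 := by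
      refine dvd_trans ⟨(u⁻¹ : Bˣ), ?_⟩ h1
      rw [hc, mul_assoc]
      simp
    obtain ⟨φ, hφ0, hφ1⟩ := phi_exists
    obtain ⟨t, ht⟩ := hdvd
    have : (1:ℂ) = 0 := by rw [← hφ1, ht, map_mul, hφ0, zero_mul]
    exact one_ne_zero this

def Pel : Polynomial B := Polynomial.C (C (X 0)) * Polynomial.X + Polynomial.C (C (X 1) * X 0)

lemma unit_of_deg_zero {p q : Polynomial B} (hpq : p * q = Pel) (hp : p.natDegree = 0) :
    IsUnit p := by
  obtain ⟨r, rfl⟩ := Polynomial.natDegree_eq_zero.mp hp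
  have h1 : r ∣ C (X 0) := by
    refine ⟨q.coeff 1, ?_⟩
    have := congrArg (fun f => Polynomial.coeff f 1) hpq
    simpa [Pel] using this.symm
  have h0 : r ∣ C (X 1) * X 0 := by
    refine ⟨q.coeff 0, ?_⟩
    have := congrArg (fun f => Polynomial.coeff f 0) hpq
    simpa [Pel] using this.symm
  exact (Polynomial.isUnit_C).mpr (unit_of_dvd h1 h0)

lemma irred_Pel : Irreducible Pel := by
  have haz : (C (X 0) : B) ≠ 0 := C_ne_zero.mpr (X_ne_zero 0)
  have hdeg : Pel.natDegree = 1 := by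
    unfold Pel
    exact Polynomial.natDegree_linear haz
  constructor
  · intro h
    have := Polynomial.natDegree_eq_zero_of_isUnit h
    omega
  · intro p q hpq
    have hp0 : p ≠ 0 := by rintro rfl; simp [Pel] at hpq; exact haz (by
      have := congrArg (fun f => Polynomial.coeff f 1) hpq
      simpa [Pel] using this)
    have hq0 : q ≠ 0 := by rintro rfl; rw [mul_zero] at hpq; exact haz (by
      have := congrArg (fun f => Polynomial.coeff f 1) hpq
      simpa [Pel] using this)
    have hsum : p.natDegree + q.natDegree = 1 := by
      rw [← Polynomial.natDegree_mul hp0 hq0, ← hpq, hdeg]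
    rcases Nat.eq_zero_or_pos p.natDegree with h | h
    · exact Or.inl (unit_of_deg_zero hpq.symm h)
    · have : q.natDegree = 0 := by omega
      exact Or.inr (unit_of_deg_zero (by rw [mul_comm]; exact hpq.symm) this)

lemma finSuccEquiv_gElt : (MvPolynomial.finSuccEquiv R0 1) gElt = Pel := by
  have h1 : (X 1 : S) = X (Fin.succ 0) := rfl
  rw [gElt, Pel, map_add, map_mul, map_mul, h1, finSuccEquiv_X_zero, finSuccEquiv_X_succ]
  rw [show ((MvPolynomial.finSuccEquiv R0 1) (C (X 0)) : Polynomial B) = Polynomial.C (C (X 0)) by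
    simp [finSuccEquiv_apply]]
  rw [show ((MvPolynomial.finSuccEquiv R0 1) (C (X 1)) : Polynomial B) = Polynomial.C (C (X 1)) by
    simp [finSuccEquiv_apply]]
  rw [map_mul]

lemma prime_gElt : Prime gElt := by
  apply UniqueFactorizationMonoid.irreducible_iff_prime.mp
  rw [← MulEquiv.irreducible_iff (MvPolynomial.finSuccEquiv R0 1).toMulEquiv]
  show Irreducible ((MvPolynomial.finSuccEquiv R0 1) gElt)
  rw [finSuccEquiv_gElt]
  exact irred_Pel

lemma not_dvd_U0 : ¬ gElt ∣ (X 0 : S) := by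
  rintro ⟨t, ht⟩
  have h := congrArg (MvPolynomial.aeval (![1,0] : Fin 2 → R0)) ht
  simp [gElt] at h
  exact prime_X0.not_isUnit (IsUnit.of_mul_eq_one _ h.symm)

lemma U0g_mem : (X 0 : S) * gElt ∈ idlI := Ideal.subset_span (Set.mem_insert _ _)
lemma U1g_mem : (X 1 : S) * gElt ∈ idlI :=
  Ideal.subset_span (Set.mem_insert_of_mem _ rfl)

lemma hne1 : (Finsupp.single 0 1 + Finsupp.single 1 1 : Fin 2 →₀ ℕ) ≠ Finsupp.single 0 2 := by
  intro h
  have := DFunLike.congr_fun h 1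
  simp at this

theorem stmt_18 :
    idealContent idlI = Ideal.span {(X 0 : R0), (X 1 : R0)} ∧
    (∀ x : S ⧸ idlI,
      (∃ n : ℕ,
        ∀ y ∈ (Ideal.span {Ideal.Quotient.mk idlI (X 0 : S),
            Ideal.Quotient.mk idlI (X 1 : S)}) ^ n, y * x = 0) ↔
        x ∈ Ideal.span {Ideal.Quotient.mk idlI gElt}) ∧
    Ideal.Quotient.mk idlI ((X 0 : S) * gElt) = 0 ∧
    Ideal.Quotient.mk idlI ((X 1 : S) * gElt) = 0 ∧
    (∀ (L : Type) [CommRing L] [Algebra (S ⧸ idlI) L]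
        [IsLocalization.Away (Ideal.Quotient.mk idlI (C (X 0) : S)) L],
      @algebraMap (S ⧸ idlI) L _ _ ‹_› (Ideal.Quotient.mk idlI gElt) ≠ 0) := by
  have hIle : idlI ≤ Ideal.map (C : R0 →+* S) (Ideal.span {(X 0 : R0), (X 1 : R0)}) := by
    have hg : gElt ∈ Ideal.map (C : R0 →+* S) (Ideal.span {(X 0 : R0), (X 1 : R0)}) := by
      rw [gElt]
      refine add_mem (Ideal.mul_mem_right _ _ ?_) (Ideal.mul_mem_right _ _ ?_)
      · exact Ideal.mem_map_of_mem _ (Ideal.subset_span (Set.mem_insert _ _))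
      · exact Ideal.mem_map_of_mem _ (Ideal.subset_span (Set.mem_insert_of_mem _ rfl))
    rw [idlI, Ideal.span_le]
    rintro p hp
    rcases hp with rfl | rfl
    · exact Ideal.mul_mem_left _ _ hg
    · exact Ideal.mul_mem_left _ _ hg
  refine ⟨?_, ?_, ?_, ?_, ?_⟩
  · apply le_antisymm
    · rw [idealContent, Ideal.span_le]
      intro y hy
      simp only [Set.mem_iUnion, Set.mem_range] at hy
      obtain ⟨f, hf, m, rfl⟩ := hy
      exact mem_map_C_iff.mp (hIle hf) m
    · rw [Ideal.span_le]
      rintro y hy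
      rcases hy with rfl | rfl
      · apply Ideal.subset_span
        simp only [Set.mem_iUnion, Set.mem_range]
        refine ⟨(X 0 : S) * gElt, U0g_mem, Finsupp.single 0 2, ?_⟩
        rw [U0g_eq, coeff_add, coeff_monomial, coeff_monomial, if_pos rfl, if_neg hne1, add_zero]
      · apply Ideal.subset_span
        simp only [Set.mem_iUnion, Set.mem_range]
        refine ⟨(X 0 : S) * gElt, U0g_mem, Finsupp.single 0 1 + Finsupp.single 1 1, ?_⟩
        rw [U0g_eq, coeff_add, coeff_monomial, coeff_monomial, if_neg (Ne.symm hne1), if_pos rfl,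
          zero_add]
  · intro x
    constructor
    · rintro ⟨n, hn⟩
      obtain ⟨f, rfl⟩ := Ideal.Quotient.mk_surjective x
      have h0 : Ideal.Quotient.mk idlI ((X 0 : S)^n * f) = 0 := by
        have := hn ((Ideal.Quotient.mk idlI (X 0 : S))^n)
          (Ideal.pow_mem_pow (Ideal.subset_span (Set.mem_insert _ _)) n)
        rw [map_mul, map_pow]
        exact this
      have hmem : (X 0 : S)^n * f ∈ idlI := Ideal.Quotient.eq_zero_iff_mem.mp h0
      rw [idlI] at hmem
      obtain ⟨a, b, hab⟩ := Ideal.mem_span_pair.mp hmem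
      have hdvd : gElt ∣ (X 0 : S)^n * f := ⟨a * X 0 + b * X 1, by linear_combination hab.symm⟩
      rcases prime_gElt.2.2 _ _ hdvd with h | h
      · exact absurd (prime_gElt.dvd_of_dvd_pow h) not_dvd_U0
      · obtain ⟨q, rfl⟩ := h
        refine (Ideal.mem_span_singleton (α := S ⧸ idlI)).mpr ?_
        exact ⟨Ideal.Quotient.mk idlI q, by rw [← map_mul]⟩
    · intro hx
      refine ⟨1, fun y hy => ?_⟩
      rw [Submodule.pow_one] at hy
      obtain ⟨a, b, rfl⟩ := Ideal.mem_span_pair.mp hy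
      obtain ⟨c, hc⟩ := (Ideal.mem_span_singleton (α := S ⧸ idlI)).mp hx
      have e0 : Ideal.Quotient.mk idlI (X 0 : S) * Ideal.Quotient.mk idlI gElt = 0 := by
        rw [← map_mul]
        exact Ideal.Quotient.eq_zero_iff_mem.mpr U0g_mem
      have e1 : Ideal.Quotient.mk idlI (X 1 : S) * Ideal.Quotient.mk idlI gElt = 0 := by
        rw [← map_mul]
        exact Ideal.Quotient.eq_zero_iff_mem.mpr U1g_mem
      rw [hc]
      linear_combination (a * c) * e0 + (b * c) * e1
  · exact Ideal.Quotient.eq_zero_iff_mem.mpr U0g_mem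
  · exact Ideal.Quotient.eq_zero_iff_mem.mpr U1g_mem
  · intro L _ _ _ h
    rw [IsLocalization.map_eq_zero_iff
      (Submonoid.powers (Ideal.Quotient.mk idlI (C (X 0) : S))) L] at h
    obtain ⟨⟨m, k, rfl⟩, hm⟩ := h
    have hmem : (C (X 0) : S)^k * gElt ∈ idlI := by
      apply Ideal.Quotient.eq_zero_iff_mem.mp
      rw [map_mul, map_pow]
      exact hm
    rw [idlI] at hmem
    obtain ⟨a, b, hab⟩ := Ideal.mem_span_pair.mp hmem
    have hc : (C (X 0) : S)^k = a * X 0 + b * X 1 := by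
      apply mul_right_cancel₀ gElt_ne_zero
      linear_combination hab.symm
    have h2 := congrArg (MvPolynomial.aeval (0 : Fin 2 → R0)) hc
    simp at h2

end
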